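/- Let k be an integer, let α be a real number with 0 < α < 1, and let q be a real number with 0 < q < 1. Then the function x ↦ θ( (−1)^k q^α e^{−x} ; q ) (from ℝ to ℝ) is differentiable at x = 0 with derivative θ( (−1)^k q^α ; q ) · Σ_{n≥0} ( (−1)^k q^{n+α}/(1 − (−1)^k q^{n+α}) − (−1)^k q^{n+1−α}/(1 − (−1)^k q^{n+1−α}) ), the series converging absolutely. -/

import Mathlib

open Real

private lemma ratio_mono {a b : ℝ} (ha : 0 ≤ a) (hab : a ≤ b) (hb : b < 1) :
    a / (1 - a) ≤ b / (1 - b) :=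
  div_le_div₀ (by linarith) hab (by linarith) (by linarith)

private lemma abs_div_one_sub_le {a b : ℝ} (hab : |a| ≤ b) (hb : b < 1) :
    |a / (1 - a)| ≤ b / (1 - b) := by
  have h0 : 0 ≤ b := (abs_nonneg a).trans hab
  have h1 : 1 - b ≤ |1 - a| := by
    have h2 : |(1:ℝ)| - |a| ≤ |1 - a| := abs_sub_abs_le_abs_sub 1 a
    rw [abs_one] at h2; linarith
  rw [abs_div]
  exact div_le_div₀ h0 hab (by linarith) h1

private lemma abs_log_one_sub_le {a b : ℝ} (hab : |a| ≤ b) (hb : b < 1) :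
    |Real.log (1 - a)| ≤ b / (1 - b) := by
  have haa : -b ≤ a ∧ a ≤ b := abs_le.mp hab
  have h1 : 0 < 1 - a := by linarith [haa.2]
  have h0 : 0 ≤ b := (abs_nonneg a).trans hab
  have hb1 : 0 < 1 - b := by linarith
  rw [abs_le]
  constructor
  · have hlog : Real.log (1 - a)⁻¹ ≤ (1 - a)⁻¹ - 1 := Real.log_le_sub_one_of_pos (inv_pos.mpr h1)
    rw [Real.log_inv] at hlog
    have h2 : (1 - a)⁻¹ - 1 = a / (1 - a) := by field_simp; ring
    rw [h2] at hlog
    have h3 : a / (1 - a) ≤ b / (1 - a) := (div_le_div_iff_of_pos_right h1).mpr haa.2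
    have h4 : b / (1 - a) ≤ b / (1 - b) := by gcongr; · exact haa.2
    linarith
  · have hlog : Real.log (1 - a) ≤ (1 - a) - 1 := Real.log_le_sub_one_of_pos h1
    have h4 : b ≤ b / (1 - b) := by
      rw [le_div_iff₀ hb1]; nlinarith
    linarith [haa.1]

private lemma tprod_eq_exp_tsum_log {g : ℕ → ℝ} (hpos : ∀ n, 0 < g n)
    (hs : Summable fun n => Real.log (g n)) :
    ∏' n, g n = Real.exp (∑' n, Real.log (g n)) := by
  have h := hs.hasSum.rexp
  have h2 : (Real.exp ∘ fun n => Real.log (g n)) = g := funext fun n => Real.exp_log (hpos n)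
  rw [h2] at h
  exact h.tprod_eq

private lemma aux_hasDeriv (a b y : ℝ) (ha : 1 - a * Real.exp (-y) ≠ 0)
    (hb : 1 - b * Real.exp y ≠ 0) :
    HasDerivAt (fun x => Real.log (1 - a * Real.exp (-x)) + Real.log (1 - b * Real.exp x))
      (a * Real.exp (-y) / (1 - a * Real.exp (-y)) - b * Real.exp y / (1 - b * Real.exp y)) y := by
  have h1 : HasDerivAt (fun x : ℝ => -x) (-1) y := (hasDerivAt_id y).neg
  have h2 : HasDerivAt (fun x : ℝ => Real.exp (-x)) (Real.exp (-y) * -1) y :=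
    (Real.hasDerivAt_exp (-y)).comp y h1
  have hA : HasDerivAt (fun x : ℝ => 1 - a * Real.exp (-x)) (a * Real.exp (-y)) y := by
    have h3 := (h2.const_mul a).const_sub 1
    exact h3.congr_deriv (by ring)
  have hB : HasDerivAt (fun x : ℝ => 1 - b * Real.exp x) (-(b * Real.exp y)) y := by
    have h3 := ((Real.hasDerivAt_exp y).const_mul b).const_sub 1
    convert h3 using 1
  have h := (hA.log ha).add (hB.log hb)
  exact h.congr_deriv (by ring)

/-- The modified Jacobi theta function (real version)
`θ(z;q) = ∏_{j ≥ 0} (1 - z q^j)(1 - q^{j+1}/z)`. -/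
noncomputable def jacobiThetaR (z q : ℝ) : ℝ :=
  ∏' j : ℕ, (1 - z * q ^ j) * (1 - q ^ (j + 1) / z)

/-- the logarithmic-derivative computation of
`x ↦ θ((-1)^k q^α e^{-x}; q)` at `x = 0`; the Lambert-type series converges absolutely. -/
theorem theta_deriv (k : ℤ) (α : ℝ) (hα0 : 0 < α) (hα1 : α < 1)
    (q : ℝ) (hq0 : 0 < q) (hq1 : q < 1) :
    (Summable fun n : ℕ =>
        |(-1 : ℝ) ^ k * q ^ ((n : ℝ) + α) / (1 - (-1 : ℝ) ^ k * q ^ ((n : ℝ) + α)) -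
          (-1 : ℝ) ^ k * q ^ ((n : ℝ) + 1 - α) /
            (1 - (-1 : ℝ) ^ k * q ^ ((n : ℝ) + 1 - α))|) ∧
      HasDerivAt (fun x : ℝ => jacobiThetaR ((-1 : ℝ) ^ k * q ^ α * Real.exp (-x)) q)
        (jacobiThetaR ((-1 : ℝ) ^ k * q ^ α) q *
          ∑' n : ℕ,
            ((-1 : ℝ) ^ k * q ^ ((n : ℝ) + α) / (1 - (-1 : ℝ) ^ k * q ^ ((n : ℝ) + α)) -
              (-1 : ℝ) ^ k * q ^ ((n : ℝ) + 1 - α) /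
                (1 - (-1 : ℝ) ^ k * q ^ ((n : ℝ) + 1 - α))))
        0 := by

  set e : ℝ := (-1 : ℝ) ^ k with he_def
  have he : e = 1 ∨ e = -1 := by
    rcases Int.even_or_odd k with h | h
    · left; exact h.neg_one_zpow
    · right; exact h.neg_one_zpow
  have habse : |e| = 1 := by rcases he with h | h <;> rw [h] <;> norm_num
  have hee : e * e = 1 := by rcases he with h | h <;> rw [h] <;> norm_num
  have he0 : e ≠ 0 := by rcases he with h | h <;> rw [h] <;> norm_num
  set m : ℝ := min α (1 - α) with hm_def
  have hm0 : 0 < m := lt_min hα0 (by linarith)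
  have hmα : m ≤ α := min_le_left _ _
  have hmα' : m ≤ 1 - α := min_le_right _ _
  set s : ℝ := q ^ (m / 2) with hs_def
  have hs0 : 0 < s := Real.rpow_pos_of_pos hq0 _
  have hs1 : s < 1 := Real.rpow_lt_one hq0.le hq1 (by linarith)
  set ε : ℝ := m / 2 * (-Real.log q) with hε_def
  have hlogq : Real.log q < 0 := Real.log_neg hq0 hq1
  have hε0 : 0 < ε := mul_pos (by linarith) (by linarith)
  have hexpε : Real.exp ε = q ^ (-(m / 2)) := by
    rw [Real.rpow_def_of_pos hq0]; congr 1; ring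
  -- key bound
  have key : ∀ β : ℝ, m ≤ β → ∀ x : ℝ, |x| ≤ ε → ∀ n : ℕ,
      q ^ ((n : ℝ) + β) * Real.exp x ≤ q ^ n * s := by
    intro β hβ x hx n
    have h1 : q ^ ((n : ℝ) + β) = q ^ (n : ℕ) * q ^ β := by
      rw [Real.rpow_add hq0, Real.rpow_natCast]
    rw [h1, mul_assoc]
    refine mul_le_mul_of_nonneg_left ?_ (pow_nonneg hq0.le n)
    have h2 : Real.exp x ≤ q ^ (-(m / 2)) := by
      rw [← hexpε]; exact Real.exp_le_exp.mpr ((le_abs_self x).trans hx)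
    calc q ^ β * Real.exp x ≤ q ^ β * q ^ (-(m / 2)) :=
          mul_le_mul_of_nonneg_left h2 (Real.rpow_nonneg hq0.le _)
      _ = q ^ (β - m / 2) := by rw [← Real.rpow_add hq0, ← sub_eq_add_neg]
      _ ≤ q ^ (m / 2) := Real.rpow_le_rpow_of_exponent_ge hq0 hq1.le (by linarith)
  set t : Set ℝ := Metric.ball (0 : ℝ) ε with ht_def
  have hmem : ∀ x ∈ t, |x| ≤ ε := fun x hx => le_of_lt (by simpa [ht_def, Real.dist_eq] using hx)
  -- the factors
  have hUb : ∀ (n : ℕ) (x : ℝ), |x| ≤ ε → |e * q ^ ((n : ℝ) + α) * Real.exp (-x)| ≤ q ^ n * s := by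
    intro n x hx
    rw [abs_mul, abs_mul, habse, one_mul, abs_of_pos (Real.rpow_pos_of_pos hq0 _),
      abs_of_pos (Real.exp_pos _)]
    exact key α hmα (-x) (by rwa [abs_neg]) n
  have hVb : ∀ (n : ℕ) (x : ℝ), |x| ≤ ε → |e * q ^ ((n : ℝ) + 1 - α) * Real.exp x| ≤ q ^ n * s := by
    intro n x hx
    rw [abs_mul, abs_mul, habse, one_mul, abs_of_pos (Real.rpow_pos_of_pos hq0 _),
      abs_of_pos (Real.exp_pos _)]
    have h1 : (n : ℝ) + 1 - α = (n : ℝ) + (1 - α) := by ring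
    rw [h1]
    exact key (1 - α) hmα' x hx n
  have hqns : ∀ n : ℕ, q ^ n * s < 1 :=
    fun n => lt_of_le_of_lt (mul_le_of_le_one_left hs0.le (pow_le_one₀ hq0.le hq1.le)) hs1
  have hqns0 : ∀ n : ℕ, 0 ≤ q ^ n * s := fun n => mul_nonneg (pow_nonneg hq0.le n) hs0.le
  -- ratio bound helper
  have hratio : ∀ (a : ℝ) (n : ℕ), |a| ≤ q ^ n * s → |a / (1 - a)| ≤ q ^ n * (s / (1 - s)) := by
    intro a n ha
    have h1 := abs_div_one_sub_le ha (hqns n)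
    have hq1s : q ^ n * s ≤ s := mul_le_of_le_one_left hs0.le (pow_le_one₀ hq0.le hq1.le)
    have h2 : q ^ n * s / (1 - q ^ n * s) ≤ q ^ n * s / (1 - s) := by
      gcongr <;> linarith [hqns0 n]
    calc |a / (1 - a)| ≤ q ^ n * s / (1 - q ^ n * s) := h1
      _ ≤ q ^ n * s / (1 - s) := h2
      _ = q ^ n * (s / (1 - s)) := by ring
  have hlogbnd : ∀ (a : ℝ) (n : ℕ), |a| ≤ q ^ n * s →
      |Real.log (1 - a)| ≤ q ^ n * (s / (1 - s)) := by
    intro a n ha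
    have h1 := abs_log_one_sub_le ha (hqns n)
    have hq1s : q ^ n * s ≤ s := mul_le_of_le_one_left hs0.le (pow_le_one₀ hq0.le hq1.le)
    have h2 : q ^ n * s / (1 - q ^ n * s) ≤ q ^ n * s / (1 - s) := by
      gcongr <;> linarith [hqns0 n]
    calc |Real.log (1 - a)| ≤ q ^ n * s / (1 - q ^ n * s) := h1
      _ ≤ q ^ n * s / (1 - s) := h2
      _ = q ^ n * (s / (1 - s)) := by ring
  -- nonvanishing
  have hne : ∀ (a : ℝ) (n : ℕ), |a| ≤ q ^ n * s → 1 - a ≠ 0 ∧ 0 < 1 - a := by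
    intro a n ha
    have := abs_le.mp (ha.trans (hqns n).le)
    constructor
    · intro h; rw [sub_eq_zero] at h; nlinarith [hqns n, abs_le.mp ha]
    · nlinarith [hqns n, abs_le.mp ha]
  -- the log-factor functions and their derivatives
  set G : ℕ → ℝ → ℝ := fun n x =>
    Real.log (1 - e * q ^ ((n : ℝ) + α) * Real.exp (-x)) +
      Real.log (1 - e * q ^ ((n : ℝ) + 1 - α) * Real.exp x) with hG_def
  set G' : ℕ → ℝ → ℝ := fun n x =>
    e * q ^ ((n : ℝ) + α) * Real.exp (-x) / (1 - e * q ^ ((n : ℝ) + α) * Real.exp (-x)) -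
      e * q ^ ((n : ℝ) + 1 - α) * Real.exp x / (1 - e * q ^ ((n : ℝ) + 1 - α) * Real.exp x)
    with hG'_def
  have hderiv : ∀ (n : ℕ), ∀ y ∈ t, HasDerivAt (G n) (G' n y) y := by
    intro n y hy
    exact aux_hasDeriv _ _ y (hne _ n (hUb n y (hmem y hy))).1 (hne _ n (hVb n y (hmem y hy))).1
  have habs_sub : ∀ X Y : ℝ, |X - Y| ≤ |X| + |Y| := by
    intro X Y
    calc |X - Y| = |X + -Y| := by rw [sub_eq_add_neg]
      _ ≤ |X| + |-Y| := abs_add_le _ _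
      _ = |X| + |Y| := by rw [abs_neg]
  have hbound : ∀ (n : ℕ), ∀ y ∈ t, ‖G' n y‖ ≤ q ^ n * (2 * (s / (1 - s))) := by
    intro n y hy
    rw [Real.norm_eq_abs]
    have b1 := hratio _ n (hUb n y (hmem y hy))
    have b2 := hratio _ n (hVb n y (hmem y hy))
    calc |G' n y| ≤ _ + _ := habs_sub _ _
      _ ≤ q ^ n * (s / (1 - s)) + q ^ n * (s / (1 - s)) := add_le_add b1 b2
      _ = q ^ n * (2 * (s / (1 - s))) := by ring
  have hsum_u : Summable (fun n : ℕ => q ^ n * (2 * (s / (1 - s)))) :=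
    (summable_geometric_of_lt_one hq0.le hq1).mul_right _
  have hGbound : ∀ (n : ℕ) (x : ℝ), |x| ≤ ε → ‖G n x‖ ≤ q ^ n * (2 * (s / (1 - s))) := by
    intro n x hx
    rw [Real.norm_eq_abs]
    have b1 := hlogbnd _ n (hUb n x hx)
    have b2 := hlogbnd _ n (hVb n x hx)
    calc |G n x| ≤ _ + _ := abs_add_le _ _
      _ ≤ q ^ n * (s / (1 - s)) + q ^ n * (s / (1 - s)) := add_le_add b1 b2
      _ = q ^ n * (2 * (s / (1 - s))) := by ring
  have hsum_g : ∀ x : ℝ, |x| ≤ ε → Summable (fun n => G n x) := fun x hx =>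
    Summable.of_norm_bounded hsum_u (fun n => hGbound n x hx)
  have h0t : (0 : ℝ) ∈ t := Metric.mem_ball_self hε0
  have h0ε : |(0 : ℝ)| ≤ ε := by simp [hε0.le]
  have hL : HasDerivAt (fun z => ∑' n, G n z) (∑' n, G' n 0) 0 :=
    hasDerivAt_tsum_of_isPreconnected hsum_u Metric.isOpen_ball
      (convex_ball (0 : ℝ) ε).isPreconnected hderiv hbound h0t (hsum_g 0 h0ε) h0t
  have hExp := hL.exp
  -- pointwise identification with the theta product
  have heq : ∀ x : ℝ, |x| ≤ ε →
      jacobiThetaR (e * q ^ α * Real.exp (-x)) q = Real.exp (∑' n, G n x) := by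
    intro x hx
    have hposU : ∀ n : ℕ, 0 < 1 - e * q ^ ((n : ℝ) + α) * Real.exp (-x) := fun n =>
      (hne _ n (hUb n x hx)).2
    have hposV : ∀ n : ℕ, 0 < 1 - e * q ^ ((n : ℝ) + 1 - α) * Real.exp x := fun n =>
      (hne _ n (hVb n x hx)).2
    have hd : e * q ^ α * Real.exp (-x) ≠ 0 :=
      mul_ne_zero (mul_ne_zero he0 (Real.rpow_pos_of_pos hq0 _).ne') (Real.exp_pos _).ne'
    have hfac : ∀ j : ℕ,
        (1 - (e * q ^ α * Real.exp (-x)) * q ^ j) * (1 - q ^ (j + 1) / (e * q ^ α * Real.exp (-x)))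
          = (1 - e * q ^ ((j : ℝ) + α) * Real.exp (-x)) *
            (1 - e * q ^ ((j : ℝ) + 1 - α) * Real.exp x) := by
      intro j
      have e1 : (e * q ^ α * Real.exp (-x)) * (q : ℝ) ^ (j : ℕ)
          = e * q ^ ((j : ℝ) + α) * Real.exp (-x) := by
        calc (e * q ^ α * Real.exp (-x)) * (q : ℝ) ^ (j : ℕ)
            = e * (q ^ α * q ^ ((j : ℝ))) * Real.exp (-x) := by
              rw [← Real.rpow_natCast q j]; ring
          _ = e * q ^ ((j : ℝ) + α) * Real.exp (-x) := by
              rw [← Real.rpow_add hq0, add_comm]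
      have e2 : (q : ℝ) ^ (j + 1 : ℕ) / (e * q ^ α * Real.exp (-x))
          = e * q ^ ((j : ℝ) + 1 - α) * Real.exp x := by
        rw [div_eq_iff hd]
        have h3 : (q : ℝ) ^ (j + 1 : ℕ) = q ^ ((j : ℝ) + 1) := by
          rw [← Real.rpow_natCast q (j + 1)]; push_cast; ring_nf
        have h4 : (j : ℝ) + 1 - α + α = (j : ℝ) + 1 := by ring
        calc (q : ℝ) ^ (j + 1 : ℕ) = q ^ ((j : ℝ) + 1) := h3
          _ = (e * e) * (q ^ ((j : ℝ) + 1 - α) * q ^ α) * (Real.exp x * Real.exp (-x)) := by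
              rw [hee, ← Real.rpow_add hq0, ← Real.exp_add, add_neg_cancel, Real.exp_zero, h4]
              ring
          _ = e * q ^ ((j : ℝ) + 1 - α) * Real.exp x * (e * q ^ α * Real.exp (-x)) := by ring
      rw [e1, e2]
    have hposP : ∀ n : ℕ, 0 < (1 - e * q ^ ((n : ℝ) + α) * Real.exp (-x)) *
        (1 - e * q ^ ((n : ℝ) + 1 - α) * Real.exp x) := fun n => mul_pos (hposU n) (hposV n)
    have hlogP : ∀ n : ℕ, Real.log ((1 - e * q ^ ((n : ℝ) + α) * Real.exp (-x)) *
        (1 - e * q ^ ((n : ℝ) + 1 - α) * Real.exp x)) = G n x := fun n =>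
      Real.log_mul (hposU n).ne' (hposV n).ne'
    rw [jacobiThetaR, tprod_congr hfac, tprod_eq_exp_tsum_log hposP
      ((hsum_g x hx).congr (fun n => (hlogP n).symm))]
    exact congrArg Real.exp (tsum_congr hlogP)
  have hEq : (fun x : ℝ => jacobiThetaR (e * q ^ α * Real.exp (-x)) q)
      =ᶠ[nhds 0] (fun z => Real.exp (∑' n, G n z)) := by
    filter_upwards [Metric.ball_mem_nhds (0 : ℝ) hε0] with x hx using heq x (hmem x hx)
  have hF := hExp.congr_of_eventuallyEq hEq
  have h1 : Real.exp (∑' n, G n 0) = jacobiThetaR (e * q ^ α) q := by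
    have h := heq 0 h0ε
    simp only [neg_zero, Real.exp_zero, mul_one] at h
    exact h.symm
  have h2 : (∑' n, G' n 0) = ∑' n : ℕ,
      (e * q ^ ((n : ℝ) + α) / (1 - e * q ^ ((n : ℝ) + α)) -
        e * q ^ ((n : ℝ) + 1 - α) / (1 - e * q ^ ((n : ℝ) + 1 - α))) := by
    refine tsum_congr fun n => ?_
    simp only [hG'_def, neg_zero, Real.exp_zero, mul_one]
  constructor
  · refine Summable.of_nonneg_of_le (fun n => abs_nonneg _) (fun n => ?_) hsum_u
    have hU0 : |e * q ^ ((n : ℝ) + α)| ≤ q ^ n * s := by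
      simpa using hUb n 0 h0ε
    have hV0 : |e * q ^ ((n : ℝ) + 1 - α)| ≤ q ^ n * s := by
      simpa using hVb n 0 h0ε
    have b1 := hratio _ n hU0
    have b2 := hratio _ n hV0
    calc |e * q ^ ((n : ℝ) + α) / (1 - e * q ^ ((n : ℝ) + α)) -
          e * q ^ ((n : ℝ) + 1 - α) / (1 - e * q ^ ((n : ℝ) + 1 - α))| ≤ _ + _ := habs_sub _ _
      _ ≤ q ^ n * (s / (1 - s)) + q ^ n * (s / (1 - s)) := add_le_add b1 b2
      _ = q ^ n * (2 * (s / (1 - s))) := by ring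
  · rw [← h1, ← h2]
    exact hF
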